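/- Let n ≥ 1 and k ≥ 1 be integers and m ≥ 1. For each player j ∈ {1,…,n}, let v_j be a multi-unit valuation on m items that is k-minded with respect to a set K_j ⊆ {1,…,m} with |K_j| ≤ k. Fix a player i and let v̄_i be a multi-unit valuation on m items, k-minded with respect to K_i, such that v̄_i(s̄) − v̄_i(s) ≥ v_i(s̄) − v_i(s) for all s̄ > s in {0,…,m}. Let δ > 0 and let δ̄ be a multiple of δ with δ̄ ≥ 4nkδ. Let T ⊆ {1,…,n}, and define u_j = v_j^δ for j ∉ T and u_j(s) = v_j(s) + |{ x ∈ K_j : x ≤ s }|·2δkn for j ∈ T (where v^δ denotes the δ-marginal-rounded valuation). Suppose the allocation s = (s_1,…,s_n) maximizes Σ_{j=1}^n u_j(s_j) over all allocations of m items among n players. Define ū_i(t) = v̄_i(t) + |{ x ∈ K_i : x ≤ t }|·2δ̄kn. Then for every allocation ŝ = (ŝ_1,…,ŝ_n) with ŝ_i < s_i and ŝ_i, s_i ∈ K_i ∪ {0}, it holds that ū_i(ŝ_i) + Σ_{j≠i} v_j^{δ̄}(ŝ_j) < ū_i(s_i) + Σ_{j≠i} v_j^{δ̄}(s_j). -/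

import Mathlib

/-- `x` rounded down to the nearest multiple of `δ`. -/
noncomputable def roundDown (δ x : ℝ) : ℝ := δ * ⌊x / δ⌋

/-- The `δ`-marginal-rounded valuation of a multi-unit valuation `v`. -/
noncomputable def marginalRound (δ : ℝ) (v : ℕ → ℝ) (s : ℕ) : ℝ :=
  ∑ j ∈ Finset.Icc 1 s, roundDown δ (v j - v (j - 1))

lemma roundDown_le (δ x : ℝ) (hδ : 0 < δ) : roundDown δ x ≤ x := by
  rw [roundDown]
  calc δ * ⌊x / δ⌋ ≤ δ * (x / δ) :=
        mul_le_mul_of_nonneg_left (Int.floor_le _) hδ.le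
    _ = x := by field_simp

lemma le_roundDown (δ x : ℝ) (hδ : 0 < δ) : x - δ ≤ roundDown δ x := by
  rw [roundDown]
  have h := Int.sub_one_lt_floor (x / δ)
  have : δ * (x / δ - 1) < δ * ⌊x / δ⌋ := by
    exact mul_lt_mul_of_pos_left h hδ
  have hx : δ * (x / δ - 1) = x - δ := by field_simp
  linarith

lemma roundDown_zero (δ : ℝ) : roundDown δ 0 = 0 := by
  simp [roundDown]

lemma roundDown_mul_le (δ δb x : ℝ) (hδ : 0 < δ) (hδb : 0 < δb)
    (c : ℕ) (hc : δb = (c : ℝ) * δ) : roundDown δb x ≤ roundDown δ x := by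
  have h1 : roundDown δb x ≤ x := roundDown_le δb x hδb
  have h2 : roundDown δb x = δ * (((c : ℤ) * ⌊x / δb⌋ : ℤ) : ℝ) := by
    rw [roundDown, hc]; push_cast; ring
  rw [h2] at h1 ⊢
  set z : ℤ := (c : ℤ) * ⌊x / δb⌋ with hz
  have hzle : (z : ℝ) ≤ x / δ := by
    rw [le_div_iff₀ hδ]; linarith
  have hfl : z ≤ ⌊x / δ⌋ := Int.le_floor.mpr hzle
  rw [roundDown]
  exact mul_le_mul_of_nonneg_left (by exact_mod_cast hfl) hδ.le

lemma marginalRound_succ (δ : ℝ) (v : ℕ → ℝ) (s : ℕ) :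
    marginalRound δ v (s + 1) = marginalRound δ v s + roundDown δ (v (s + 1) - v s) := by
  rw [marginalRound, marginalRound, Finset.sum_Icc_succ_top (Nat.le_add_left 1 s)]
  simp

lemma marginalRound_le (δ : ℝ) (hδ : 0 < δ) (v : ℕ → ℝ) (hv0 : v 0 = 0) :
    ∀ s, marginalRound δ v s ≤ v s := by
  intro s
  induction s with
  | zero => simp [marginalRound, hv0]
  | succ s ih =>
    rw [marginalRound_succ]
    have := roundDown_le δ (v (s + 1) - v s) hδ
    linarith

lemma marginalRound_param_le (δ δb : ℝ) (hδ : 0 < δ) (hδb : 0 < δb)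
    (c : ℕ) (hc : δb = (c : ℝ) * δ) (v : ℕ → ℝ) (s : ℕ) :
    marginalRound δb v s ≤ marginalRound δ v s :=
  Finset.sum_le_sum fun j _ => roundDown_mul_le δ δb _ hδ hδb c hc

lemma le_marginalRound (δ : ℝ) (hδ : 0 < δ) (v : ℕ → ℝ) (hv0 : v 0 = 0)
    (K : Finset ℕ) (m : ℕ)
    (hkm : ∀ s : ℕ, 1 ≤ s → s ≤ m → s ∉ K → v s = v (s - 1)) :
    ∀ s, s ≤ m →
      v s - ((K.filter (fun x => x ≤ s)).card : ℝ) * δ ≤ marginalRound δ v s := by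
  intro s
  induction s with
  | zero =>
    intro _
    have h0 : marginalRound δ v 0 = 0 := by simp [marginalRound]
    rw [h0, hv0]
    have : (0:ℝ) ≤ ((K.filter (fun x => x ≤ 0)).card : ℝ) * δ := by positivity
    linarith
  | succ s ih =>
    intro hsm
    have ih' := ih (by omega)
    rw [marginalRound_succ]
    by_cases h : s + 1 ∈ K
    · have hins : K.filter (fun x => x ≤ s + 1) = insert (s + 1) (K.filter (fun x => x ≤ s)) := by
        ext x
        simp only [Finset.mem_filter, Finset.mem_insert]
        constructor
        · rintro ⟨hxK, hx⟩
          rcases Nat.lt_or_ge x (s + 1) with h' | h'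
          · exact Or.inr ⟨hxK, by omega⟩
          · exact Or.inl (by omega)
        · rintro (rfl | ⟨hxK, hx⟩)
          · exact ⟨h, le_refl _⟩
          · exact ⟨hxK, by omega⟩
      have hcard : (K.filter (fun x => x ≤ s + 1)).card = (K.filter (fun x => x ≤ s)).card + 1 := by
        rw [hins, Finset.card_insert_of_notMem (by simp)]
      have hrd := le_roundDown δ (v (s + 1) - v s) hδ
      rw [hcard]
      push_cast
      linarith
    · have hcard : K.filter (fun x => x ≤ s + 1) = K.filter (fun x => x ≤ s) := by
        ext x
        simp only [Finset.mem_filter]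
        constructor
        · rintro ⟨hxK, hx⟩
          have : x ≠ s + 1 := fun he => h (he ▸ hxK)
          exact ⟨hxK, by omega⟩
        · rintro ⟨hxK, hx⟩
          exact ⟨hxK, by omega⟩
      have hv : v (s + 1) = v s := by
        have := hkm (s + 1) (by omega) hsm h
        simpa using this
      rw [hcard, hv, sub_self, roundDown_zero]
      linarith

lemma count_lt (K : Finset ℕ) (a b : ℕ) (hab : a < b) (hb : b ∈ K) :
    (K.filter (fun x => x ≤ a)).card + 1 ≤ (K.filter (fun x => x ≤ b)).card := by
  have hss : K.filter (fun x => x ≤ a) ⊂ K.filter (fun x => x ≤ b) := by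
    constructor
    · intro x hx
      rw [Finset.mem_filter] at hx ⊢
      exact ⟨hx.1, by omega⟩
    · intro hsub
      have hbmem : b ∈ K.filter (fun x => x ≤ b) := Finset.mem_filter.2 ⟨hb, le_refl b⟩
      have := hsub hbmem
      rw [Finset.mem_filter] at this
      omega
  have := Finset.card_lt_card hss
  omega


set_option maxHeartbeats 1600000 in
/-- Case I of the monotonicity argument. If `s` maximizes the
modified welfare `Σ u_j` at rounding parameter `δ`, `v̄_i` dominates `v_i`
marginally, and `δ̄` is a multiple of `δ` with `δ̄ ≥ 4nkδ`, then at rounding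
parameter `δ̄` with reward valuation `ū_i` for player `i`, every allocation `ŝ`
giving player `i` fewer items (with `ŝ_i, s_i ∈ K_i ∪ {0}`) has strictly
smaller modified welfare than `s`. -/
theorem monotonicity_case_rounding_increases
    (n k m : ℕ) (hn : 1 ≤ n) (hk : 1 ≤ k) (hm : 1 ≤ m)
    (v : Fin n → ℕ → ℝ)
    (hv0 : ∀ j, v j 0 = 0)
    (hvmono : ∀ j, ∀ s t : ℕ, s ≤ t → t ≤ m → v j s ≤ v j t)
    (K : Fin n → Finset ℕ)
    (hKsub : ∀ j, ∀ x ∈ K j, 1 ≤ x ∧ x ≤ m)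
    (hKcard : ∀ j, (K j).card ≤ k)
    (hkm : ∀ j, ∀ s : ℕ, 1 ≤ s → s ≤ m → s ∉ K j → v j s = v j (s - 1))
    (i : Fin n) (vb : ℕ → ℝ)
    (hvb0 : vb 0 = 0)
    (hvbmono : ∀ s t : ℕ, s ≤ t → t ≤ m → vb s ≤ vb t)
    (hvbkm : ∀ s : ℕ, 1 ≤ s → s ≤ m → s ∉ K i → vb s = vb (s - 1))
    (hdom : ∀ s t : ℕ, s < t → t ≤ m → v i t - v i s ≤ vb t - vb s)
    (δ δb : ℝ) (hδ : 0 < δ) (hmul : ∃ c : ℕ, δb = (c : ℝ) * δ)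
    (hδb : 4 * (n : ℝ) * (k : ℝ) * δ ≤ δb)
    (T : Finset (Fin n))
    (u : Fin n → ℕ → ℝ)
    (hu : ∀ j s, u j s =
      if j ∈ T then
        v j s + (((K j).filter (fun x => x ≤ s)).card : ℝ) * (2 * δ * k * n)
      else marginalRound δ (v j) s)
    (salloc : Fin n → ℕ) (hsalloc : ∑ j, salloc j ≤ m)
    (hmax : ∀ t : Fin n → ℕ, (∑ j, t j ≤ m) → ∑ j, u j (t j) ≤ ∑ j, u j (salloc j))
    (ub : ℕ → ℝ)
    (hub : ∀ t : ℕ, ub t =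
      vb t + (((K i).filter (fun x => x ≤ t)).card : ℝ) * (2 * δb * k * n)) :
    ∀ sh : Fin n → ℕ, (∑ j, sh j ≤ m) → sh i < salloc i →
      (sh i ∈ K i ∨ sh i = 0) → (salloc i ∈ K i ∨ salloc i = 0) →
      ub (sh i) + ∑ j ∈ Finset.univ.erase i, marginalRound δb (v j) (sh j) <
        ub (salloc i) + ∑ j ∈ Finset.univ.erase i, marginalRound δb (v j) (salloc j) := by
  intro sh hshm hlt hshK hsaK
  obtain ⟨c, hc⟩ := hmul
  have hn' : (1:ℝ) ≤ (n:ℝ) := by exact_mod_cast hn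
  have hk' : (1:ℝ) ≤ (k:ℝ) := by exact_mod_cast hk
  have hδb0 : 0 < δb := lt_of_lt_of_le (by positivity) hδb
  have hkδb0 : (0:ℝ) < (k:ℝ) * δb := by positivity
  have hsaK' : salloc i ∈ K i := by
    rcases hsaK with h | h
    · exact h
    · exact absurd (h ▸ hlt) (Nat.not_lt_zero _)
  have hsle : ∀ j, salloc j ≤ m := fun j =>
    le_trans (Finset.single_le_sum (fun _ _ => Nat.zero_le _) (Finset.mem_univ j)) hsalloc
  have hshle : ∀ j, sh j ≤ m := fun j =>
    le_trans (Finset.single_le_sum (fun _ _ => Nat.zero_le _) (Finset.mem_univ j)) hshm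
  have hknn : (0:ℝ) ≤ (k:ℝ) := by positivity
  -- per-player bound for j ≠ i
  have hstep2 : ∀ j ∈ Finset.univ.erase i,
      marginalRound δb (v j) (sh j) - marginalRound δb (v j) (salloc j)
        ≤ (u j (sh j) - u j (salloc j)) + 3/2 * ((k:ℝ) * δb) := by
    intro j _
    have hub1 : marginalRound δb (v j) (sh j) ≤ marginalRound δ (v j) (sh j) :=
      marginalRound_param_le δ δb hδ hδb0 c hc (v j) (sh j)
    have hub1' : marginalRound δb (v j) (sh j) ≤ v j (sh j) :=
      marginalRound_le δb hδb0 (v j) (hv0 j) (sh j)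
    have hlb : v j (salloc j) - (((K j).filter (fun x => x ≤ salloc j)).card : ℝ) * δb
        ≤ marginalRound δb (v j) (salloc j) :=
      le_marginalRound δb hδb0 (v j) (hv0 j) (K j) m (hkm j) (salloc j) (hsle j)
    have hcard1 : (((K j).filter (fun x => x ≤ salloc j)).card : ℝ) ≤ (k:ℝ) := by
      exact_mod_cast le_trans (Finset.card_filter_le _ _) (hKcard j)
    have hlb' : v j (salloc j) - (k:ℝ) * δb ≤ marginalRound δb (v j) (salloc j) := by
      have := mul_le_mul_of_nonneg_right hcard1 hδb0.le
      linarith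
    by_cases hT : j ∈ T
    · rw [hu j (sh j), hu j (salloc j)]
      simp only [if_pos hT]
      have hA : (0:ℝ) ≤ 2 * δ * (k:ℝ) * (n:ℝ) := by positivity
      have hcsh : (0:ℝ) ≤ (((K j).filter (fun x => x ≤ sh j)).card : ℝ) := by positivity
      linarith [mul_le_mul_of_nonneg_right hcard1 hA, mul_nonneg hcsh hA,
        mul_le_mul_of_nonneg_left hδb hknn]
    · rw [hu j (sh j), hu j (salloc j)]
      simp only [if_neg hT]
      have h2 : marginalRound δ (v j) (salloc j) ≤ v j (salloc j) :=
        marginalRound_le δ hδ (v j) (hv0 j) (salloc j)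
      linarith
  -- bound on player i's modified utility change
  have hstep3 : u i (salloc i) - u i (sh i)
      ≤ vb (salloc i) - vb (sh i) + 1/2 * ((k:ℝ) * δb) := by
    have hd := hdom (sh i) (salloc i) hlt (hsle i)
    by_cases hT : i ∈ T
    · rw [hu i (salloc i), hu i (sh i)]
      simp only [if_pos hT]
      have hA : (0:ℝ) ≤ 2 * δ * (k:ℝ) * (n:ℝ) := by positivity
      have hcsa : (((K i).filter (fun x => x ≤ salloc i)).card : ℝ) ≤ (k:ℝ) := by
        exact_mod_cast le_trans (Finset.card_filter_le _ _) (hKcard i)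
      have hcsh : (0:ℝ) ≤ (((K i).filter (fun x => x ≤ sh i)).card : ℝ) := by positivity
      linarith [mul_le_mul_of_nonneg_right hcsa hA, mul_nonneg hcsh hA,
        mul_le_mul_of_nonneg_left hδb hknn]
    · rw [hu i (salloc i), hu i (sh i)]
      simp only [if_neg hT]
      have h1 : marginalRound δ (v i) (salloc i) ≤ v i (salloc i) :=
        marginalRound_le δ hδ (v i) (hv0 i) (salloc i)
      have h2 : v i (sh i) - (((K i).filter (fun x => x ≤ sh i)).card : ℝ) * δ
          ≤ marginalRound δ (v i) (sh i) :=
        le_marginalRound δ hδ (v i) (hv0 i) (K i) m (hkm i) (sh i) (hshle i)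
      have hcsh : (((K i).filter (fun x => x ≤ sh i)).card : ℝ) ≤ (k:ℝ) := by
        exact_mod_cast le_trans (Finset.card_filter_le _ _) (hKcard i)
      have hnk : (1:ℝ) ≤ (n:ℝ) * (k:ℝ) := by
        nlinarith [mul_nonneg (sub_nonneg.2 hn') (sub_nonneg.2 hk')]
      have h4δ : 4 * δ ≤ δb := by
        nlinarith [mul_nonneg (sub_nonneg.2 hnk) hδ.le]
      have hkd : (k:ℝ) * δ ≤ (k:ℝ) * (δb / 2) :=
        mul_le_mul_of_nonneg_left (by linarith) hknn
      have hcd := mul_le_mul_of_nonneg_right hcsh hδ.le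
      linarith
  -- bound on the reward valuation change
  have hcount := count_lt (K i) (sh i) (salloc i) hlt hsaK'
  have hstep4 : ub (sh i) - ub (salloc i)
      ≤ vb (sh i) - vb (salloc i) - 2 * δb * (k:ℝ) * (n:ℝ) := by
    rw [hub (sh i), hub (salloc i)]
    have hB : (0:ℝ) ≤ 2 * δb * (k:ℝ) * (n:ℝ) := by positivity
    have hc' : (((K i).filter (fun x => x ≤ sh i)).card : ℝ) + 1
        ≤ (((K i).filter (fun x => x ≤ salloc i)).card : ℝ) := by exact_mod_cast hcount
    linarith [mul_le_mul_of_nonneg_right hc' hB]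
  -- optimality
  have hopt := hmax sh hshm
  have hsplit1 : ∑ j, u j (sh j) = u i (sh i) + ∑ j ∈ Finset.univ.erase i, u j (sh j) :=
    (Finset.add_sum_erase _ _ (Finset.mem_univ i)).symm
  have hsplit2 : ∑ j, u j (salloc j)
      = u i (salloc i) + ∑ j ∈ Finset.univ.erase i, u j (salloc j) :=
    (Finset.add_sum_erase _ _ (Finset.mem_univ i)).symm
  have hopt' : ∑ j ∈ Finset.univ.erase i, (u j (sh j) - u j (salloc j))
      ≤ u i (salloc i) - u i (sh i) := by
    rw [Finset.sum_sub_distrib]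
    rw [hsplit1, hsplit2] at hopt
    linarith
  -- sum the per-player bounds
  have hsum2 : ∑ j ∈ Finset.univ.erase i,
      (marginalRound δb (v j) (sh j) - marginalRound δb (v j) (salloc j))
      ≤ (∑ j ∈ Finset.univ.erase i, (u j (sh j) - u j (salloc j)))
        + ((n:ℝ) - 1) * (3/2 * ((k:ℝ) * δb)) := by
    calc ∑ j ∈ Finset.univ.erase i,
        (marginalRound δb (v j) (sh j) - marginalRound δb (v j) (salloc j))
        ≤ ∑ j ∈ Finset.univ.erase i,
            ((u j (sh j) - u j (salloc j)) + 3/2 * ((k:ℝ) * δb)) :=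
          Finset.sum_le_sum hstep2
      _ = (∑ j ∈ Finset.univ.erase i, (u j (sh j) - u j (salloc j)))
            + ((n:ℝ) - 1) * (3/2 * ((k:ℝ) * δb)) := by
          rw [Finset.sum_add_distrib, Finset.sum_const,
            Finset.card_erase_of_mem (Finset.mem_univ i), Finset.card_univ,
            Fintype.card_fin, nsmul_eq_mul, Nat.cast_sub hn, Nat.cast_one]
  have hsub1 : ∑ j ∈ Finset.univ.erase i,
      (marginalRound δb (v j) (sh j) - marginalRound δb (v j) (salloc j))
      = (∑ j ∈ Finset.univ.erase i, marginalRound δb (v j) (sh j))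
        - ∑ j ∈ Finset.univ.erase i, marginalRound δb (v j) (salloc j) :=
    Finset.sum_sub_distrib _ _
  rw [hsub1] at hsum2
  have hfinal : ((n:ℝ) - 1) * (3/2 * ((k:ℝ) * δb)) + 1/2 * ((k:ℝ) * δb)
      - 2 * δb * (k:ℝ) * (n:ℝ) < 0 := by
    linarith [mul_le_mul_of_nonneg_right hn' hkδb0.le, hkδb0]
  linarith [hsum2, hopt', hstep3, hstep4, hfinal]
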